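/- Let log* : ℝ≥1 → ℕ be defined by log*(x) = 0 if x ≤ 1 and log*(x) = 1 + log*(log₂ x) otherwise. Then for the function F(x) = 2⌈log₂(x+1)⌉ + 1, there is a constant α > 0 such that for all x ≥ 16, log*(F(x)) ≤ log*(x) and iterating F at most α·log*(x) times starting from x yields a value below 10. -/

import Mathlib

/-- `F x = 2⌈log₂(x+1)⌉ + 1`; note `Nat.size x = ⌈log₂(x+1)⌉`. -/
def F (x : ℕ) : ℕ := 2 * Nat.size x + 1

/-- Iterated base-2 logarithm. -/
def logStar : ℕ → ℕ
  | x => if x ≤ 1 then 0 else logStar (Nat.log 2 x) + 1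
decreasing_by
  exact Nat.log_lt_self 2 (by omega)

lemma logStar_eq (x : ℕ) :
    logStar x = if x ≤ 1 then 0 else logStar (Nat.log 2 x) + 1 := by
  rw [logStar]

lemma logStar_of_le (x : ℕ) (h : x ≤ 1) : logStar x = 0 := by
  rw [logStar_eq, if_pos h]

lemma logStar_of_ge (x : ℕ) (h : 2 ≤ x) : logStar x = logStar (Nat.log 2 x) + 1 := by
  rw [logStar_eq, if_neg (by omega)]

lemma logStar_mono : ∀ a b : ℕ, a ≤ b → logStar a ≤ logStar b := by
  intro a
  induction a using Nat.strong_induction_on with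
  | _ a ih =>
    intro b hab
    by_cases ha : a ≤ 1
    · rw [logStar_of_le a ha]; exact Nat.zero_le _
    · rw [logStar_of_ge a (by omega), logStar_of_ge b (by omega)]
      exact Nat.succ_le_succ (ih _ (Nat.log_lt_self 2 (by omega)) _
        (Nat.log_mono_right hab))

lemma logStar_le_succ (m w : ℕ) (hm : 2 ≤ m) (h : Nat.log 2 m ≤ w) :
    logStar m ≤ logStar w + 1 := by
  rw [logStar_of_ge m hm]
  exact Nat.succ_le_succ (logStar_mono _ _ h)

lemma log2_ge_of_pow_le (k x : ℕ) (h : 2 ^ k ≤ x) : k ≤ Nat.log 2 x := by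
  have hx : 1 ≤ x := le_trans Nat.one_le_two_pow h
  exact (Nat.le_log_iff_pow_le (by norm_num) (by omega)).mpr h

lemma F_le (x : ℕ) (_hx : 1 ≤ x) : F x ≤ 2 * Nat.log 2 x + 3 := by
  have : Nat.size x ≤ Nat.log 2 x + 1 :=
    Nat.size_le.mpr (Nat.lt_pow_succ_log_self (by norm_num) x)
  unfold F; omega

lemma log2_four_mul (y : ℕ) (hy : 1 ≤ y) :
    Nat.log 2 (y * 2 * 2) = Nat.log 2 y + 2 := by
  rw [Nat.log_mul_base (by norm_num) (by positivity),
    Nat.log_mul_base (by norm_num) (by omega)]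

lemma log2_eight_mul (y : ℕ) (hy : 1 ≤ y) :
    Nat.log 2 (y * 2 * 2 * 2) = Nat.log 2 y + 3 := by
  rw [Nat.log_mul_base (by norm_num) (by positivity), log2_four_mul y hy]

lemma log2_small (w k : ℕ) (h : w + k < 2 ^ (w + 1)) : Nat.log 2 (w + k) ≤ w := by
  rcases Nat.eq_zero_or_pos (w + k) with h0 | h0
  · simp [h0]
  · have := Nat.log_lt_of_lt_pow (b := 2) (by omega) h
    omega

lemma two_pow_lower (w : ℕ) : w + 1 ≤ 2 ^ w := Nat.lt_two_pow_self

/-- `log₂(w+2) ≤ w` for `w ≥ 1`. -/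
lemma log2_add_two (w : ℕ) (hw : 1 ≤ w) : Nat.log 2 (w + 2) ≤ w := by
  apply log2_small
  have h1 : w + 1 ≤ 2 ^ w := two_pow_lower w
  have : 2 ^ (w + 1) = 2 * 2 ^ w := by ring
  omega

/-- `log₂(w+3) ≤ w` for `w ≥ 2`. -/
lemma log2_add_three (w : ℕ) (hw : 2 ≤ w) : Nat.log 2 (w + 3) ≤ w := by
  apply log2_small
  have h1 : w + 1 ≤ 2 ^ w := two_pow_lower w
  have : 2 ^ (w + 1) = 2 * 2 ^ w := by ring
  omega

lemma logStar_F_le (x : ℕ) (hx : 16 ≤ x) : logStar (F x) ≤ logStar x := by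
  set y := Nat.log 2 x with hy
  have hy4 : 4 ≤ y := log2_ge_of_pow_le 4 x (by norm_num; omega)
  set w := Nat.log 2 y with hw
  have hw2 : 2 ≤ w := log2_ge_of_pow_le 2 y (by omega)
  have hF : F x ≤ 2 * y + 3 := F_le x (by omega)
  have h1 : logStar (F x) ≤ logStar (2 * y + 3) := logStar_mono _ _ hF
  have hlog : Nat.log 2 (2 * y + 3) ≤ w + 2 := by
    have := Nat.log_mono_right (b := 2) (show 2 * y + 3 ≤ y * 2 * 2 by omega)
    rw [log2_four_mul y (by omega)] at this
    omega
  have h2 : logStar (2 * y + 3) ≤ logStar (w + 2) + 1 :=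
    logStar_le_succ _ _ (by omega) hlog
  have h3 : logStar (w + 2) ≤ logStar w + 1 :=
    logStar_le_succ _ _ (by omega) (log2_add_two w (by omega))
  rw [logStar_of_ge x (by omega), ← hy, logStar_of_ge y (by omega), ← hw]
  omega

/-- Two applications of `F` strictly decrease `logStar`, for `x ≥ 2^16`. -/
lemma logStar_FF_lt (x : ℕ) (hx : 65536 ≤ x) : logStar (F (F x)) + 1 ≤ logStar x := by
  set y := Nat.log 2 x with hy
  have hy16 : 16 ≤ y := log2_ge_of_pow_le 16 x (by norm_num; omega)
  set z := Nat.log 2 y with hz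
  have hz4 : 4 ≤ z := log2_ge_of_pow_le 4 y (by omega)
  set v := Nat.log 2 z with hv
  have hv2 : 2 ≤ v := log2_ge_of_pow_le 2 z (by omega)
  have hF : F x ≤ 2 * y + 3 := F_le x (by omega)
  have hFpos : 1 ≤ F x := by unfold F; omega
  have hlogF : Nat.log 2 (F x) ≤ z + 2 := by
    have h1 := Nat.log_mono_right (b := 2) (le_trans hF (show 2 * y + 3 ≤ y * 2 * 2 by omega))
    rw [log2_four_mul y (by omega)] at h1
    omega
  have hFF : F (F x) ≤ 2 * z + 7 := by
    have := F_le (F x) hFpos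
    omega
  have h1 : logStar (F (F x)) ≤ logStar (2 * z + 7) := logStar_mono _ _ hFF
  have hlog : Nat.log 2 (2 * z + 7) ≤ v + 3 := by
    have := Nat.log_mono_right (b := 2) (show 2 * z + 7 ≤ z * 2 * 2 * 2 by omega)
    rw [log2_eight_mul z (by omega)] at this
    omega
  have h2 : logStar (2 * z + 7) ≤ logStar (v + 3) + 1 :=
    logStar_le_succ _ _ (by omega) hlog
  have h3 : logStar (v + 3) ≤ logStar v + 1 :=
    logStar_le_succ _ _ (by omega) (log2_add_three v hv2)
  rw [logStar_of_ge x (by omega), ← hy, logStar_of_ge y (by omega), ← hz,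
    logStar_of_ge z (by omega), ← hv]
  omega

lemma F_lt_ten (x : ℕ) (hx : x < 16) : F x < 10 := by
  have : Nat.size x ≤ 4 := Nat.size_le.mpr (by norm_num; omega)
  unfold F; omega

lemma FF_small (x : ℕ) (hx : x < 65536) : F (F x) < 16 := by
  have h1 : Nat.size x ≤ 16 := Nat.size_le.mpr (by norm_num; omega)
  have h2 : F x ≤ 33 := by unfold F; omega
  have h3 : Nat.size (F x) ≤ 6 := Nat.size_le.mpr (by norm_num; omega)
  show 2 * Nat.size (F x) + 1 < 16
  omega

lemma main_ind (n : ℕ) : ∀ x : ℕ, logStar x ≤ n → ∃ t, t ≤ 2 * n + 1 ∧ F^[t] x < 10 := by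
  induction n with
  | zero =>
    intro x h
    have hx : x ≤ 1 := by
      by_contra hc
      rw [logStar_of_ge x (by omega)] at h
      omega
    exact ⟨0, by omega, by simpa using by omega⟩
  | succ n ih =>
    intro x h
    by_cases hx : x < 16
    · exact ⟨1, by omega, by simpa using F_lt_ten x hx⟩
    · by_cases hx2 : x < 65536
      · refine ⟨3, by omega, ?_⟩
        show F (F (F x)) < 10
        exact F_lt_ten _ (FF_small x hx2)
      · have hd := logStar_FF_lt x (by omega)
        obtain ⟨t, ht, hlt⟩ := ih (F (F x)) (by omega)
        refine ⟨t + 2, by omega, ?_⟩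
        rw [Function.iterate_add_apply]
        exact hlt

theorem logStar_F_and_iterate :
    ∃ α : ℕ, 0 < α ∧ ∀ x : ℕ, 16 ≤ x →
      logStar (F x) ≤ logStar x ∧ ∃ t : ℕ, t ≤ α * logStar x ∧ F^[t] x < 10 := by
  refine ⟨3, by norm_num, fun x hx => ⟨logStar_F_le x hx, ?_⟩⟩
  obtain ⟨t, ht, hlt⟩ := main_ind (logStar x) x le_rfl
  have h1 : 1 ≤ logStar x := by rw [logStar_of_ge x (by omega)]; omega
  exact ⟨t, by omega, hlt⟩
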